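/- Let 0 < q < 1 and |\theta| < 1/q, with \theta' := q\theta - 1. Define f[xy;\theta] := \sum_{m=1}^\infty q^m/([m]_q([m]_q - \theta q^m)). Then \theta f[xy;\theta] + (1-q) = \theta' f[xy;\theta'] - 1/\theta'. -/

import Mathlib

noncomputable def qnum (q : ℝ) (k : ℕ) : ℝ := (1 - q ^ k) / (1 - q)

noncomputable def fxy (q θ : ℝ) : ℝ :=
  ∑' m : ℕ+, q ^ (m : ℕ) / (qnum q m * (qnum q m - θ * q ^ (m : ℕ)))

theorem fxy_difference_equation (q θ : ℝ) (hq0 : 0 < q) (hq1 : q < 1)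
    (hθ : |θ| < 1 / q) :
    θ * fxy q θ + (1 - q) = (q * θ - 1) * fxy q (q * θ - 1) - 1 / (q * θ - 1) := by
  have h1q : (0:ℝ) < 1 - q := by linarith
  have h1qne : (1:ℝ) - q ≠ 0 := ne_of_gt h1q
  have hθq : |θ| * q < 1 := by
    have := (lt_div_iff₀ hq0).mp hθ
    linarith
  have hδ : (0:ℝ) < 1 - |θ| * q := by linarith
  have hqpow : ∀ n : ℕ, q ^ (n+1) ≤ q := by
    intro n
    calc q ^ (n+1) ≤ q ^ 1 := pow_le_pow_of_le_one hq0.le hq1.le (by omega)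
      _ = q := pow_one q
  have hqpowpos : ∀ n : ℕ, 0 < q ^ n := fun n => pow_pos hq0 n
  have hqnum_ge : ∀ n : ℕ, 1 ≤ qnum q (n+1) := by
    intro n
    rw [qnum, le_div_iff₀ h1q]
    have := hqpow n; linarith
  have hqnum_pos : ∀ n : ℕ, 0 < qnum q (n+1) := fun n => lt_of_lt_of_le one_pos (hqnum_ge n)
  have hqnum_ne : ∀ n : ℕ, qnum q (n+1) ≠ 0 := fun n => ne_of_gt (hqnum_pos n)
  set D : ℕ → ℝ := fun n => qnum q (n+1) - θ * q ^ (n+1) with hDdef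
  have hD : ∀ n : ℕ, 1 - |θ| * q ≤ D n := by
    intro n
    have h1 : θ * q ^ (n+1) ≤ |θ| * q := by
      calc θ * q ^ (n+1) ≤ |θ| * q ^ (n+1) :=
            mul_le_mul_of_nonneg_right (le_abs_self θ) (hqpowpos (n+1)).le
        _ ≤ |θ| * q := mul_le_mul_of_nonneg_left (hqpow n) (abs_nonneg θ)
    have := hqnum_ge n
    simp only [hDdef]
    linarith
  have hDpos : ∀ n : ℕ, 0 < D n := fun n => lt_of_lt_of_le hδ (hD n)
  have hDne : ∀ n : ℕ, D n ≠ 0 := fun n => ne_of_gt (hDpos n)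
  -- qnum successor identity
  have hqnum_succ : ∀ n : ℕ, qnum q (n+2) = qnum q (n+1) + q ^ (n+1) := by
    intro n
    rw [qnum, qnum]
    field_simp
    ring
  -- the shifted parameter
  set θ' : ℝ := q * θ - 1 with hθ'def
  have hθ'neg : θ' < 0 := by
    have h1 : q * θ ≤ q * |θ| := mul_le_mul_of_nonneg_left (le_abs_self θ) hq0.le
    have : q * |θ| < 1 := by linarith [hθq]
    simp only [hθ'def]; linarith
  have hθ'ne : θ' ≠ 0 := ne_of_lt hθ'neg
  -- denominator shift identity
  have hshift : ∀ n : ℕ, qnum q (n+1) - θ' * q ^ (n+1) = D (n+1) := by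
    intro n
    simp only [hDdef, hθ'def]
    rw [hqnum_succ n]
    ring
  -- the general term as a function on ℕ
  set F : ℝ → ℕ → ℝ := fun t m => q ^ m / (qnum q m * (qnum q m - t * q ^ m)) with hFdef
  have hfxy : ∀ t : ℝ, fxy q t = ∑' n : ℕ, F t (n+1) := by
    intro t
    rw [fxy, ← Equiv.pnatEquivNat.symm.tsum_eq]
    apply tsum_congr
    intro n
    simp [hFdef, Equiv.pnatEquivNat]
  -- partial fractions
  have hpf : ∀ (t : ℝ) (m : ℕ), qnum q m ≠ 0 → qnum q m - t * q ^ m ≠ 0 →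
      t * F t m = 1 / (qnum q m - t * q ^ m) - 1 / qnum q m := by
    intro t m h1 h2
    simp only [hFdef]
    rw [div_sub_div _ _ h2 h1, mul_div_assoc']
    rw [div_eq_div_iff (mul_ne_zero h1 h2) (mul_ne_zero h2 h1)]
    ring
  -- the auxiliary sequences
  set A : ℕ → ℝ := fun n => 1 / D n - (1 - q) with hAdef
  set B : ℕ → ℝ := fun n => 1 / qnum q (n+1) - (1 - q) with hBdef
  -- closed forms
  have hAform : ∀ n : ℕ, A n = q ^ (n+1) * (1 + (1 - q) * θ) / D n := by
    intro n
    have hd := hDne n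
    rw [eq_div_iff hd]
    have hnum : 1 - (1 - q) * D n = q ^ (n+1) * (1 + (1 - q) * θ) := by
      simp only [hDdef, qnum]
      field_simp
      ring
    simp only [hAdef]
    field_simp
    linarith [hnum]
  have hBform : ∀ n : ℕ, B n = q ^ (n+1) / qnum q (n+1) := by
    intro n
    have hd := hqnum_ne n
    rw [eq_div_iff hd]
    have hnum : 1 - (1 - q) * qnum q (n+1) = q ^ (n+1) := by
      rw [qnum]; field_simp; ring
    simp only [hBdef]
    field_simp
    linarith [hnum]
  -- summability
  have hgeo : Summable (fun n : ℕ => q ^ n) := summable_geometric_of_lt_one hq0.le hq1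
  have hsA : Summable A := by
    apply Summable.of_abs
    apply Summable.of_nonneg_of_le (fun n => abs_nonneg _) ?_
      (hgeo.mul_left (q * |1 + (1 - q) * θ| / (1 - |θ| * q)))
    intro n
    rw [hAform n, abs_div, abs_mul, abs_pow, abs_of_pos hq0, abs_of_pos (hDpos n)]
    calc q ^ (n+1) * |1 + (1 - q) * θ| / D n
        ≤ q ^ (n+1) * |1 + (1 - q) * θ| / (1 - |θ| * q) := by
          gcongr
          exact hD n
      _ = (q * |1 + (1 - q) * θ| / (1 - |θ| * q)) * q ^ n := by ring
  have hsB : Summable B := by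
    apply Summable.of_nonneg_of_le
      (fun n => by rw [hBform n]; exact div_nonneg (by positivity) (hqnum_pos n).le) ?_ (hgeo.mul_left q)
    intro n
    rw [hBform n]
    calc q ^ (n+1) / qnum q (n+1) ≤ q ^ (n+1) / 1 := by
          gcongr
          exact hqnum_ge n
      _ = q * q ^ n := by rw [div_one]; ring
  have hsA' : Summable (fun n => A (n+1)) := (summable_nat_add_iff 1).2 hsA
  -- first series
  have hsum1 : θ * fxy q θ = (∑' n, A n) - ∑' n, B n := by
    rw [hfxy θ, ← tsum_mul_left]
    rw [show (fun n : ℕ => θ * F θ (n+1)) = fun n => A n - B n from ?_]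
    · exact Summable.tsum_sub hsA hsB
    · funext n
      rw [hpf θ (n+1) (hqnum_ne n) (hDne n)]
      simp only [hAdef, hBdef, hDdef]
      ring
  -- second series
  have hsum2 : θ' * fxy q θ' = (∑' n, A (n+1)) - ∑' n, B n := by
    rw [hfxy θ', ← tsum_mul_left]
    rw [show (fun n : ℕ => θ' * F θ' (n+1)) = fun n => A (n+1) - B n from ?_]
    · exact Summable.tsum_sub hsA' hsB
    · funext n
      have hne : qnum q (n+1) - θ' * q ^ (n+1) ≠ 0 := by rw [hshift n]; exact hDne (n+1)
      rw [hpf θ' (n+1) (hqnum_ne n) hne, hshift n]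
      simp only [hAdef, hBdef]
      ring
  have hshiftsum : ∑' n, A (n+1) = (∑' n, A n) - A 0 := by
    have := Summable.tsum_eq_zero_add hsA
    linarith
  -- value of A 0
  have hA0 : A 0 = -(1 / θ') - (1 - q) := by
    have hq1num : qnum q 1 = 1 := by rw [qnum, pow_one, div_self h1qne]
    have hD0 : D 0 = 1 - θ * q := by simp [hDdef, hq1num, pow_one]
    have hD0' : D 0 = -θ' := by rw [hD0]; simp only [hθ'def]; ring
    simp only [hAdef, hD0']
    rw [div_neg]
  rw [hsum1, hsum2, hshiftsum, hA0]
  ring
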